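/- Let d ≥ 1, ℓ ≥ 2 and n ≥ 1 be integers, and set N = (d−1)ℓ + 2 and q = N / gcd(N, n(d−1)). Then q divides gcd(d+1, ℓ−1) if and only if N divides n·gcd(d+1, 2(ℓ−1)). -/

import Mathlib

/-- Helper: for `0 ≤ c`, `N ∣ c * gcd a b ↔ N ∣ c*a ∧ N ∣ c*b`. -/
lemma dvd_mul_gcd_iff' (N c a b : ℤ) (hc : 0 ≤ c) :
    N ∣ c * (Int.gcd a b : ℤ) ↔ N ∣ c * a ∧ N ∣ c * b := by
  have h : c * (Int.gcd a b : ℤ) = (Int.gcd (c * a) (c * b) : ℤ) := by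
    rw [Int.gcd_mul_left]
    push_cast [Int.natAbs_of_nonneg hc]
    ring
  rw [h]
  constructor
  · intro hdvd
    exact ⟨hdvd.trans (Int.gcd_dvd_left _ _), hdvd.trans (Int.gcd_dvd_right _ _)⟩
  · rintro ⟨h1, h2⟩
    exact Int.dvd_coe_gcd h1 h2

/-- For integers `d ≥ 1`, `ℓ ≥ 2`, `n ≥ 1`, with `N = (d−1)ℓ + 2` and
`q = N / gcd(N, n(d−1))`, one has `q ∣ gcd(d+1, ℓ−1)` iff `N ∣ n·gcd(d+1, 2(ℓ−1))`. -/
theorem q_dvd_iff_N_dvd (d ℓ n : ℤ) (hd : 1 ≤ d) (hl : 2 ≤ ℓ) (hn : 1 ≤ n)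
    (N q : ℤ) (hN : N = (d - 1) * ℓ + 2)
    (hq : q = N / (Int.gcd N (n * (d - 1)) : ℤ)) :
    q ∣ (Int.gcd (d + 1) (ℓ - 1) : ℤ) ↔ N ∣ n * (Int.gcd (d + 1) (2 * (ℓ - 1)) : ℤ) := by
  have hNpos : 0 < N := by
    rw [hN]
    nlinarith [mul_nonneg (show (0:ℤ) ≤ d - 1 by linarith) (show (0:ℤ) ≤ ℓ by linarith)]
  set g : ℤ := (Int.gcd N (n * (d - 1)) : ℤ) with hg
  have hgdvd : g ∣ N := Int.gcd_dvd_left _ _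
  have hgpos : 0 < g := by
    have h0 : 0 < Int.gcd N (n * (d - 1)) :=
      Int.gcd_pos_iff.mpr (Or.inl hNpos.ne')
    rw [hg]; exact_mod_cast h0
  have hqg : q * g = N := by
    rw [hq, Int.ediv_mul_cancel hgdvd]
  -- key identity
  have hkey : (d - 1) * (ℓ - 1) = N - (d + 1) := by rw [hN]; ring
  -- Both sides are equivalent to N ∣ n * (d + 1)
  have hmid : N ∣ n * (d - 1) * (ℓ - 1) ↔ N ∣ n * (d + 1) := by
    constructor
    · intro h
      have : N ∣ n * N - n * (d - 1) * (ℓ - 1) := (dvd_mul_left N n).sub h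
      have e : n * N - n * (d - 1) * (ℓ - 1) = n * (d + 1) := by
        rw [mul_assoc, hkey]; ring
      rwa [e] at this
    · intro h
      have : N ∣ n * N - n * (d + 1) := (dvd_mul_left N n).sub h
      have e : n * N - n * (d + 1) = n * (d - 1) * (ℓ - 1) := by
        rw [mul_assoc, hkey]; ring
      rwa [e] at this
  constructor
  · intro hqd
    -- from q ∣ gcd(d+1, ℓ-1), get N ∣ n(d-1)·gcd, hence N ∣ n(d-1)(ℓ-1), hence N ∣ n(d+1)
    have h1 : N ∣ (Int.gcd (d + 1) (ℓ - 1) : ℤ) * g := by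
      rw [← hqg]
      exact mul_dvd_mul_right hqd g
    rw [mul_comm] at h1
    have h2 := (dvd_mul_gcd_iff' N g (d + 1) (ℓ - 1) hgpos.le).mp h1
    -- h2.2 : N ∣ g * (ℓ - 1)
    -- Instead: decompose g itself: N ∣ g*(ℓ-1) = gcd(N, n(d-1)) * (ℓ-1)
    have h3 : N ∣ (ℓ - 1) * g := by rw [mul_comm]; exact h2.2
    have h4 := (dvd_mul_gcd_iff' N (ℓ - 1) N (n * (d - 1)) (by linarith)).mp h3
    have h5 : N ∣ n * (d - 1) * (ℓ - 1) := by
      have := h4.2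
      rwa [show (ℓ - 1) * (n * (d - 1)) = n * (d - 1) * (ℓ - 1) by ring] at this
    have hnd1 : N ∣ n * (d + 1) := hmid.mp h5
    -- conclude RHS
    rw [dvd_mul_gcd_iff' N n (d + 1) (2 * (ℓ - 1)) (by linarith)]
    refine ⟨hnd1, ?_⟩
    have ha : N ∣ n * (d + 1) * (ℓ - 1) := hnd1.mul_right (ℓ - 1)
    have hb : N ∣ n * (d - 1) * (ℓ - 1) := hmid.mpr hnd1
    have := ha.sub hb
    rwa [show n * (d + 1) * (ℓ - 1) - n * (d - 1) * (ℓ - 1) = n * (2 * (ℓ - 1)) by ring]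
      at this
  · intro hrhs
    have h2 := (dvd_mul_gcd_iff' N n (d + 1) (2 * (ℓ - 1)) (by linarith)).mp hrhs
    have hnd1 : N ∣ n * (d + 1) := h2.1
    -- show q ∣ gcd(d+1, ℓ-1), i.e. N ∣ gcd(d+1,ℓ-1) * g
    have goal' : N ∣ (Int.gcd (d + 1) (ℓ - 1) : ℤ) * g := by
      rw [mul_comm, dvd_mul_gcd_iff' N g (d + 1) (ℓ - 1) hgpos.le]
      constructor
      · -- N ∣ g * (d + 1) : g = gcd(N, n(d-1)); gcd * (d+1) = gcd(N(d+1), n(d-1)(d+1))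
        rw [mul_comm, dvd_mul_gcd_iff' N (d + 1) N (n * (d - 1)) (by linarith)]
        refine ⟨dvd_mul_left N (d + 1), ?_⟩
        have := hnd1.mul_right (d - 1)
        rwa [show n * (d + 1) * (d - 1) = (d + 1) * (n * (d - 1)) by ring] at this
      · rw [mul_comm, dvd_mul_gcd_iff' N (ℓ - 1) N (n * (d - 1)) (by linarith)]
        refine ⟨dvd_mul_left N (ℓ - 1), ?_⟩
        have := hmid.mpr hnd1
        rwa [show n * (d - 1) * (ℓ - 1) = (ℓ - 1) * (n * (d - 1)) by ring] at this
    -- cancel g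
    rw [← hqg] at goal'
    exact (mul_dvd_mul_iff_right hgpos.ne').mp goal'
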